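/- Let A be a k-algebra whose center is exactly k. Then A is universally cancellative; in particular A is cancellative. -/

import Mathlib

open TensorProduct

universe u

/-- Iterated polynomial extension `A[t₁,…,tₙ]` of a (possibly noncommutative) algebra. -/
noncomputable def PolyIterAux (A : Type u) [Ring A] : ℕ → (T : Type u) × Ring T
  | 0 => ⟨A, inferInstance⟩
  | n + 1 =>
    letI := (PolyIterAux A n).2
    ⟨Polynomial (PolyIterAux A n).1, inferInstance⟩

noncomputable def PolyIter (A : Type u) [Ring A] (n : ℕ) : Type u := (PolyIterAux A n).1

noncomputable instance instRingPolyIter (A : Type u) [Ring A] (n : ℕ) : Ring (PolyIter A n) :=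
  (PolyIterAux A n).2

noncomputable def algPolyIterAux (k A : Type u) [CommSemiring k] [Ring A] [Algebra k A] :
    (n : ℕ) → Algebra k (PolyIter A n)
  | 0 => inferInstanceAs (Algebra k A)
  | n + 1 =>
    letI := algPolyIterAux k A n
    inferInstanceAs (Algebra k (Polynomial (PolyIter A n)))

noncomputable instance instAlgebraPolyIter (k A : Type u) [CommSemiring k] [Ring A] [Algebra k A] (n : ℕ) :
    Algebra k (PolyIter A n) := algPolyIterAux k A n

/-- `A` is cancellative: `A[t] ≅ B[t]` implies `A ≅ B`. -/
def IsCancellative (k : Type u) [Field k] (A : Type u) [Ring A] [Algebra k A] : Prop :=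
  ∀ (B : Type u) [Ring B] [Algebra k B],
    Nonempty (Polynomial A ≃ₐ[k] Polynomial B) → Nonempty (A ≃ₐ[k] B)

/-- `A` is strongly cancellative: for each `n ≥ 1`,
`A[t₁,…,tₙ] ≅ B[t₁,…,tₙ]` implies `A ≅ B`. -/
def IsStronglyCancellative (k : Type u) [Field k] (A : Type u) [Ring A] [Algebra k A] : Prop :=
  ∀ (n : ℕ), 1 ≤ n → ∀ (B : Type u) [Ring B] [Algebra k B],
    Nonempty (PolyIter A n ≃ₐ[k] PolyIter B n) → Nonempty (A ≃ₐ[k] B)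

/-- `A` is universally cancellative: for every affine commutative `k`-domain `R`
admitting a `k`-algebra map `R → k`, and every `k`-algebra `B`,
`A ⊗[k] R ≅ B ⊗[k] R` implies `A ≅ B`. -/
def IsUniversallyCancellative (k : Type u) [Field k] (A : Type u) [Ring A] [Algebra k A] : Prop :=
  ∀ (R : Type u) [CommRing R] [IsDomain R] [Algebra k R],
    Algebra.FiniteType k R → (∃ f : R →ₐ[k] k, Function.Surjective f) →
    ∀ (B : Type u) [Ring B] [Algebra k B],
      Nonempty ((A ⊗[k] R) ≃ₐ[k] (B ⊗[k] R)) → Nonempty (A ≃ₐ[k] B)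


section Aux

variable {k : Type u} [Field k] {R : Type u} [CommRing R] [Algebra k R]

/-- Retraction `D ⊗ R → D` induced by a character `R → k`. -/
noncomputable def charRetract {D : Type u} [Ring D] [Algebra k D] (g : R →ₐ[k] k) :
    (D ⊗[k] R) →ₐ[k] D :=
  Algebra.TensorProduct.lift (AlgHom.id k D) ((Algebra.ofId k D).comp g)
    (fun x y => by
      simpa [Algebra.ofId_apply] using (Algebra.commute_algebraMap_right (g y) x))

lemma charRetract_tmul {D : Type u} [Ring D] [Algebra k D] (g : R →ₐ[k] k) (d : D) (r : R) :
    charRetract g (d ⊗ₜ[k] r) = g r • d := by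
  rw [charRetract, Algebra.TensorProduct.lift_tmul]
  simp [Algebra.ofId_apply, Algebra.smul_def, ← Algebra.commutes]

lemma charRetract_tmul_one {D : Type u} [Ring D] [Algebra k D] (g : R →ₐ[k] k) (d : D) :
    charRetract g (d ⊗ₜ[k] (1 : R)) = d := by
  rw [charRetract_tmul, map_one, one_smul]

lemma tmul_mem_center {D : Type u} [Ring D] [Algebra k D] {d : D}
    (hd : d ∈ Subalgebra.center k D) (r : R) :
    d ⊗ₜ[k] r ∈ Subalgebra.center k (D ⊗[k] R) := by
  rw [Subalgebra.mem_center_iff]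
  intro y
  induction y using TensorProduct.induction_on with
  | zero => simp
  | tmul e s =>
      rw [Algebra.TensorProduct.tmul_mul_tmul, Algebra.TensorProduct.tmul_mul_tmul,
        Subalgebra.mem_center_iff.mp hd e, mul_comm s r]
  | add x y hx hy => rw [add_mul, mul_add, hx, hy]

lemma central_mem_span {D : Type u} [Ring D] [Algebra k D] {x : D ⊗[k] R}
    (hx : x ∈ Subalgebra.center k (D ⊗[k] R)) :
    x ∈ Submodule.span k
      {y : D ⊗[k] R | ∃ (d : D) (r : R), d ∈ Subalgebra.center k D ∧ d ⊗ₜ[k] r = y} := by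
  classical
  set b := Module.Basis.ofVectorSpace k R with hb
  set E : (D ⊗[k] R) ≃ₗ[k] (Module.Basis.ofVectorSpaceIndex k R →₀ D) :=
    (TensorProduct.congr (LinearEquiv.refl k D) b.repr).trans
      (TensorProduct.finsuppScalarRight k k D _) with hE
  have hEtmul : ∀ (e : D) (r : R) (i), E (e ⊗ₜ[k] r) i = b.repr r i • e := by
    intro e r i
    simp [hE, TensorProduct.finsuppScalarRight_apply_tmul_apply]
  have hmul : ∀ (d : D) (z : D ⊗[k] R) (i), E ((d ⊗ₜ[k] (1 : R)) * z) i = d * E z i := by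
    intro d z i
    induction z using TensorProduct.induction_on with
    | zero => simp
    | tmul e r =>
        rw [Algebra.TensorProduct.tmul_mul_tmul, one_mul, hEtmul, hEtmul, mul_smul_comm]
    | add z w hz hw => rw [mul_add, map_add, map_add, Finsupp.add_apply, Finsupp.add_apply, hz, hw, mul_add]
  have hmul' : ∀ (d : D) (z : D ⊗[k] R) (i), E (z * (d ⊗ₜ[k] (1 : R))) i = E z i * d := by
    intro d z i
    induction z using TensorProduct.induction_on with
    | zero => simp
    | tmul e r =>
        rw [Algebra.TensorProduct.tmul_mul_tmul, mul_one, hEtmul, hEtmul, smul_mul_assoc]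
    | add z w hz hw => rw [add_mul, map_add, map_add, Finsupp.add_apply, Finsupp.add_apply, hz, hw, add_mul]
  have hsymm : ∀ (l : Module.Basis.ofVectorSpaceIndex k R →₀ D),
      E.symm l = l.sum fun i d => d ⊗ₜ[k] (b i) := by
    intro l
    have h1 : (E.symm : (Module.Basis.ofVectorSpaceIndex k R →₀ D) →ₗ[k] (D ⊗[k] R))
        = Finsupp.lsum k (fun i => (TensorProduct.mk k D R).flip (b i)) := by
      apply Finsupp.lhom_ext
      intro i d
      simp [hE, TensorProduct.finsuppScalarRight_symm_apply_single, Module.Basis.repr_symm_single_one]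
    calc E.symm l = (E.symm : (Module.Basis.ofVectorSpaceIndex k R →₀ D) →ₗ[k] (D ⊗[k] R)) l := rfl
      _ = Finsupp.lsum k (fun i => (TensorProduct.mk k D R).flip (b i)) l := by rw [h1]
      _ = l.sum fun i d => d ⊗ₜ[k] (b i) := by rw [Finsupp.lsum_apply]; rfl
  have hcent : ∀ i, E x i ∈ Subalgebra.center k D := by
    intro i
    rw [Subalgebra.mem_center_iff]
    intro d
    have h1 := Subalgebra.mem_center_iff.mp hx (d ⊗ₜ[k] (1 : R))
    have h2 := congrArg (fun z => E z i) h1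
    simpa [hmul, hmul'] using h2
  have hx2 : x = (E x).sum fun i d => d ⊗ₜ[k] (b i) := by
    rw [← hsymm, LinearEquiv.symm_apply_apply]
  rw [hx2]
  rw [Finsupp.sum]
  refine Submodule.sum_mem _ (fun i _ => Submodule.subset_span ?_)
  exact ⟨E x i, b i, hcent i, rfl⟩

lemma central_eq_tmul {D : Type u} [Ring D] [Algebra k D]
    (hD : Subalgebra.center k D = ⊥) {x : D ⊗[k] R}
    (hx : x ∈ Subalgebra.center k (D ⊗[k] R)) : ∃ r : R, (1 : D) ⊗ₜ[k] r = x := by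
  have h1 := central_mem_span hx
  have h2 : Submodule.span k
      {y : D ⊗[k] R | ∃ (d : D) (r : R), d ∈ Subalgebra.center k D ∧ d ⊗ₜ[k] r = y}
      ≤ LinearMap.range (TensorProduct.mk k D R 1) := by
    rw [Submodule.span_le]
    rintro y ⟨d, r, hd, rfl⟩
    rw [hD, Algebra.mem_bot] at hd
    obtain ⟨c, rfl⟩ := hd
    refine ⟨c • r, ?_⟩
    rw [TensorProduct.mk_apply, ← TensorProduct.smul_tmul, ← Algebra.algebraMap_eq_smul_one]
  obtain ⟨r, hr⟩ := h2 h1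
  exact ⟨r, hr⟩

lemma one_tmul_injective {D : Type u} [Ring D] [Algebra k D] [Nontrivial D] :
    Function.Injective (fun r : R => ((1 : D) ⊗ₜ[k] r : D ⊗[k] R)) := by
  obtain ⟨ℓ, hℓ⟩ := (Algebra.linearMap k D).exists_leftInverse_of_injective
    (LinearMap.ker_eq_bot.mpr (algebraMap k D).injective)
  have hℓ1 : ℓ 1 = 1 := by
    have := congrArg (fun (m : k →ₗ[k] k) => m 1) hℓ
    simpa using this
  intro r s hrs
  have := congrArg ((TensorProduct.lid k R).toLinearMap ∘ₗ LinearMap.rTensor R ℓ) hrs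
  simpa [LinearMap.rTensor_tmul, hℓ1] using this

end Aux

section Aux2

variable {k : Type u} [Field k] {R : Type u} [CommRing R] [Algebra k R]

/-- An algebra isomorphism restricts to an isomorphism of centers. -/
noncomputable def centerCongrAux {D E : Type u} [Ring D] [Algebra k D] [Ring E] [Algebra k E]
    (φ : D ≃ₐ[k] E) : Subalgebra.center k D ≃ₐ[k] Subalgebra.center k E where
  toFun x := ⟨φ x, by
    rw [Subalgebra.mem_center_iff]
    intro b
    have h := Subalgebra.mem_center_iff.mp x.2 (φ.symm b)
    calc b * φ x = φ (φ.symm b * x) := by rw [map_mul, φ.apply_symm_apply]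
    _ = φ (x * φ.symm b) := by rw [h]
    _ = φ x * b := by rw [map_mul, φ.apply_symm_apply]⟩
  invFun y := ⟨φ.symm y, by
    rw [Subalgebra.mem_center_iff]
    intro b
    have h := Subalgebra.mem_center_iff.mp y.2 (φ b)
    calc b * φ.symm y = φ.symm (φ b * y) := by rw [map_mul, φ.symm_apply_apply]
    _ = φ.symm (y * φ b) := by rw [h]
    _ = φ.symm y * b := by rw [map_mul, φ.symm_apply_apply]⟩
  left_inv x := Subtype.ext (φ.symm_apply_apply x)
  right_inv y := Subtype.ext (φ.apply_symm_apply y)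
  map_mul' x y := Subtype.ext (map_mul φ x.1 y.1)
  map_add' x y := Subtype.ext (map_add φ x.1 y.1)
  commutes' r := Subtype.ext (by simpa using φ.commutes r)

@[simp] lemma centerCongrAux_coe {D E : Type u} [Ring D] [Algebra k D] [Ring E] [Algebra k E]
    (φ : D ≃ₐ[k] E) (x : Subalgebra.center k D) :
    (centerCongrAux φ x : E) = φ x := rfl

/-- `R ≃ Z(D ⊗ R)` when `Z(D) = k`. -/
noncomputable def centerTensorEquiv (D : Type u) [Ring D] [Algebra k D] [Nontrivial D]
    (hD : Subalgebra.center k D = ⊥) :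
    R ≃ₐ[k] Subalgebra.center k (D ⊗[k] R) :=
  AlgEquiv.ofBijective
    (AlgHom.codRestrict (Algebra.TensorProduct.includeRight : R →ₐ[k] D ⊗[k] R)
      (Subalgebra.center k (D ⊗[k] R)) (fun r => tmul_mem_center (one_mem _) r))
    ⟨by
      have h : Function.Injective (fun r : R =>
          ((Subalgebra.center k (D ⊗[k] R)).val
            (AlgHom.codRestrict (Algebra.TensorProduct.includeRight : R →ₐ[k] D ⊗[k] R)
              (Subalgebra.center k (D ⊗[k] R)) (fun r => tmul_mem_center (one_mem _) r) r))) := by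
        exact one_tmul_injective (k := k) (R := R) (D := D)
      exact fun a b hab => h (congrArg _ hab),
     by
      rintro ⟨x, hx⟩
      obtain ⟨r, hr⟩ := central_eq_tmul hD hx
      exact ⟨r, Subtype.ext hr⟩⟩

@[simp] lemma centerTensorEquiv_coe (D : Type u) [Ring D] [Algebra k D] [Nontrivial D]
    (hD : Subalgebra.center k D = ⊥) (r : R) :
    (centerTensorEquiv D hD r : D ⊗[k] R) = (1 : D) ⊗ₜ[k] r := rfl

/-- The Noetherian iteration argument: if `C ⊗ R ≅ R` with `R` Noetherian admitting a
character, then every element of `C` is a scalar. -/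
lemma scalar_of_tensor_equiv (hN : IsNoetherianRing R) (f : R →ₐ[k] k)
    (C : Type u) [CommRing C] [Algebra k C] (ρ : (C ⊗[k] R) ≃ₐ[k] R) (c : C) :
    ∃ a : k, c = algebraMap k C a := by
  set g : C →ₐ[k] k := f.comp (ρ.toAlgHom.comp Algebra.TensorProduct.includeLeft) with hg
  set q : (C ⊗[k] R) →ₐ[k] R := Algebra.TensorProduct.lift ((Algebra.ofId k R).comp g)
    (AlgHom.id k R) (fun x y => Commute.all _ _) with hq
  set χ : R →ₐ[k] R := q.comp ρ.symm.toAlgHom with hχ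
  have hqtmul : ∀ (c' : C) (r : R), q (c' ⊗ₜ[k] r) = algebraMap k R (g c') * r := by
    intro c' r
    rw [hq, Algebra.TensorProduct.lift_tmul]
    rfl
  set c' : C := c - algebraMap k C (g c) with hc'
  have hgc' : g c' = 0 := by simp [hc']
  set x0 : R := ρ (c' ⊗ₜ[k] (1 : R)) with hx0
  have hχ0 : χ x0 = 0 := by
    rw [hχ, hx0, AlgHom.comp_apply]
    show q (ρ.symm (ρ (c' ⊗ₜ[k] (1 : R)))) = 0
    rw [ρ.symm_apply_apply, hqtmul, hgc', map_zero, zero_mul]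
  have hχj : ∀ r : R, χ (ρ ((1 : C) ⊗ₜ[k] r)) = r := by
    intro r
    rw [hχ, AlgHom.comp_apply]
    show q (ρ.symm (ρ ((1 : C) ⊗ₜ[k] r))) = r
    rw [ρ.symm_apply_apply, hqtmul, map_one, map_one, one_mul]
  set seq : ℕ → R := fun n => (fun r => ρ ((1 : C) ⊗ₜ[k] r))^[n] x0 with hseq
  have hseq0 : seq 0 = x0 := rfl
  have hχseq : ∀ n, χ (seq (n + 1)) = seq n := by
    intro n
    have h1 : seq (n + 1) = ρ ((1 : C) ⊗ₜ[k] (seq n)) := Function.iterate_succ_apply' _ _ _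
    rw [h1, hχj]
  set Χ : ℕ → (R →ₐ[k] R) := fun n => Nat.rec (AlgHom.id k R) (fun _ F => F.comp χ) n with hΧ
  have hΧsucc : ∀ n x, Χ (n + 1) x = Χ n (χ x) := fun n x => rfl
  have h0 : ∀ n, Χ n (seq n) = seq 0 := by
    intro n
    induction n with
    | zero => rfl
    | succ m ih => rw [hΧsucc, hχseq, ih]
  have hshift : ∀ i m, Χ (m + i) (seq i) = Χ m (seq 0) := by
    intro i
    induction i with
    | zero => intro m; rfl
    | succ i ih => intro m; rw [show m + (i + 1) = (m + i) + 1 from rfl, hΧsucc, hχseq, ih]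
  have hz : ∀ n i, i ≤ n → Χ (n + 1) (seq i) = 0 := by
    intro n i hi
    obtain ⟨t, ht⟩ : ∃ t, n + 1 = (t + 1) + i := ⟨n - i, by omega⟩
    rw [ht, hshift i (t + 1), hΧsucc, hseq0, hχ0, map_zero]
  obtain ⟨N, hstab⟩ := monotone_stabilizes_iff_noetherian.mpr hN
    ⟨fun n => Ideal.span (seq '' Set.Iic n),
      fun a b hab => Ideal.span_mono (Set.image_mono (Set.Iic_subset_Iic.mpr hab))⟩
  have hmem : seq (N + 1) ∈ Ideal.span (seq '' Set.Iic N) := by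
    have h1 : Ideal.span (seq '' Set.Iic N) = Ideal.span (seq '' Set.Iic (N + 1)) :=
      hstab (N + 1) (Nat.le_succ N)
    have h2 : seq (N + 1) ∈ Ideal.span (seq '' Set.Iic (N + 1)) :=
      Ideal.subset_span ⟨N + 1, Set.mem_Iic.mpr le_rfl, rfl⟩
    rw [h1]
    exact h2
  have hker : Ideal.span (seq '' Set.Iic N) ≤ RingHom.ker ((Χ (N + 1)) : R →ₐ[k] R).toRingHom := by
    rw [Ideal.span_le]
    rintro y ⟨i, hi, rfl⟩
    exact hz N i (Set.mem_Iic.mp hi)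
  have hz0 : seq 0 = 0 := by
    have h1 := hker hmem
    rw [RingHom.mem_ker] at h1
    rw [← h0 (N + 1)]
    exact h1
  have hc0 : c' ⊗ₜ[k] (1 : R) = (0 : C ⊗[k] R) := by
    apply ρ.injective
    rw [map_zero]
    exact hz0
  have hcz : c' = 0 := by
    have h1 := congrArg (charRetract f) hc0
    rwa [charRetract_tmul_one, map_zero] at h1
  exact ⟨g c, by rwa [sub_eq_zero] at hcz⟩

end Aux2

section Main

variable {k : Type u} [Field k] {R : Type u} [CommRing R] [Algebra k R]

/-- Elements `d ⊗ r` with `e r = 0`. -/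
def badSet (D : Type u) [Ring D] [Algebra k D] (e : R →ₐ[k] k) : Set (D ⊗[k] R) :=
  {y : D ⊗[k] R | ∃ (d : D) (r : R), e r = 0 ∧ d ⊗ₜ[k] r = y}

lemma sub_charRetract_mem_span {D : Type u} [Ring D] [Algebra k D] (e : R →ₐ[k] k)
    (x : D ⊗[k] R) :
    x - (charRetract e x) ⊗ₜ[k] (1 : R) ∈ Submodule.span k (badSet D e) := by
  induction x using TensorProduct.induction_on with
  | zero => simpa using Submodule.zero_mem _
  | tmul d r =>
      have h1 : d ⊗ₜ[k] r - (charRetract e (d ⊗ₜ[k] r)) ⊗ₜ[k] (1 : R)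
          = d ⊗ₜ[k] (r - algebraMap k R (e r)) := by
        rw [charRetract_tmul, TensorProduct.tmul_sub]
        congr 1
        rw [TensorProduct.smul_tmul, Algebra.algebraMap_eq_smul_one]
      rw [h1]
      exact Submodule.subset_span ⟨d, r - algebraMap k R (e r), by simp, rfl⟩
  | add x y hx hy =>
      have h1 : (x + y) - (charRetract e (x + y)) ⊗ₜ[k] (1 : R)
          = (x - (charRetract e x) ⊗ₜ[k] (1 : R)) + (y - (charRetract e y) ⊗ₜ[k] (1 : R)) := by
        rw [map_add, TensorProduct.add_tmul]
        abel
      rw [h1]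
      exact Submodule.add_mem _ hx hy

lemma mul_one_tmul_mem_span {D : Type u} [Ring D] [Algebra k D] (e : R →ₐ[k] k)
    (z : D ⊗[k] R) {s : R} (hs : e s = 0) :
    z * ((1 : D) ⊗ₜ[k] s) ∈ Submodule.span k (badSet D e) := by
  induction z using TensorProduct.induction_on with
  | zero => simpa [zero_mul] using Submodule.zero_mem _
  | tmul d t =>
      rw [Algebra.TensorProduct.tmul_mul_tmul, mul_one]
      exact Submodule.subset_span ⟨d, t * s, by rw [map_mul, hs, mul_zero], rfl⟩
  | add x y hx hy =>
      rw [add_mul]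
      exact Submodule.add_mem _ hx hy

lemma charRetract_eq_zero_of_mem_span {D : Type u} [Ring D] [Algebra k D] (e : R →ₐ[k] k)
    {y : D ⊗[k] R} (hy : y ∈ Submodule.span k (badSet D e)) :
    charRetract e y = 0 := by
  have h : Submodule.span k (badSet D e) ≤ LinearMap.ker (charRetract e).toLinearMap := by
    rw [Submodule.span_le]
    rintro _ ⟨d, r, hr, rfl⟩
    simp [LinearMap.mem_ker, charRetract_tmul, hr]
  simpa using h hy

lemma main_equiv {A B : Type u} [Ring A] [Algebra k A] [Ring B] [Algebra k B]
    [Nontrivial A] [Nontrivial B]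
    (hN : IsNoetherianRing R) (f : R →ₐ[k] k)
    (hA : Subalgebra.center k A = ⊥)
    (φ : (A ⊗[k] R) ≃ₐ[k] (B ⊗[k] R)) : Nonempty (A ≃ₐ[k] B) := by
  classical
  set eA := centerTensorEquiv (R := R) A hA with heA
  -- Step 1: the center of B is trivial
  have hB : Subalgebra.center k B = ⊥ := by
    refine le_antisymm ?_ bot_le
    intro x hx
    set C := Subalgebra.center k B with hC
    set ι : ((↥C) ⊗[k] R) →ₐ[k] (B ⊗[k] R) :=
      Algebra.TensorProduct.map C.val (AlgHom.id k R) with hι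
    have hιtmul : ∀ (c : ↥C) (r : R), ι (c ⊗ₜ[k] r) = (c : B) ⊗ₜ[k] r := fun c r => rfl
    have hιmem : ∀ z, ι z ∈ Subalgebra.center k (B ⊗[k] R) := by
      intro z
      induction z using TensorProduct.induction_on with
      | zero => rw [map_zero]; exact Subalgebra.zero_mem _
      | tmul c r => rw [hιtmul]; exact tmul_mem_center c.2 r
      | add u v hu hv => rw [map_add]; exact Subalgebra.add_mem _ hu hv
    have hιinj : Function.Injective ι := by
      have heq : ι.toLinearMap
          = LinearMap.rTensor R ((Subalgebra.toSubmodule C).subtype) :=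
        TensorProduct.ext' (fun c r => rfl)
      have hinj : Function.Injective
          (LinearMap.rTensor R ((Subalgebra.toSubmodule C).subtype)) :=
        Module.Flat.rTensor_preserves_injective_linearMap _ (Submodule.injective_subtype _)
      intro a b hab
      apply hinj
      rw [← heq]
      exact hab
    have hιsurj : ∀ y ∈ Subalgebra.center k (B ⊗[k] R), ∃ z, ι z = y := by
      intro y hy
      have h1 := central_mem_span hy
      have h2 : Submodule.span k
          {y : B ⊗[k] R | ∃ (d : B) (r : R), d ∈ Subalgebra.center k B ∧ d ⊗ₜ[k] r = y}
          ≤ LinearMap.range ι.toLinearMap := by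
        rw [Submodule.span_le]
        rintro _ ⟨d, r, hd, rfl⟩
        exact ⟨(⟨d, hd⟩ : ↥C) ⊗ₜ[k] r, rfl⟩
      exact h2 h1
    set ιc : ((↥C) ⊗[k] R) →ₐ[k] (Subalgebra.center k (B ⊗[k] R)) :=
      AlgHom.codRestrict ι _ hιmem with hιc
    have hbij : Function.Bijective ιc := by
      constructor
      · intro a b hab
        exact hιinj (congrArg Subtype.val hab)
      · rintro ⟨y, hy⟩
        obtain ⟨z, hz⟩ := hιsurj y hy
        exact ⟨z, Subtype.ext hz⟩
    set ρ : ((↥C) ⊗[k] R) ≃ₐ[k] R :=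
      ((AlgEquiv.ofBijective ιc hbij).trans (centerCongrAux φ).symm).trans eA.symm with hρ
    obtain ⟨a, ha⟩ := scalar_of_tensor_equiv hN f (↥C) ρ ⟨x, hx⟩
    rw [Algebra.mem_bot]
    refine ⟨a, ?_⟩
    have := congrArg (Subtype.val : ↥C → B) ha
    simpa using this.symm
  -- Step 2: transport the identification of `1 ⊗ R`
  set eB := centerTensorEquiv (R := R) B hB with heB
  set ψ : R ≃ₐ[k] R := (eA.trans (centerCongrAux φ)).trans eB.symm with hψdef
  have hψ : ∀ r : R, φ ((1 : A) ⊗ₜ[k] r) = (1 : B) ⊗ₜ[k] (ψ r) := by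
    intro r
    have h2 : eB (ψ r) = centerCongrAux φ (eA r) := by
      rw [hψdef]
      exact eB.apply_symm_apply _
    have h3 := congrArg (Subtype.val : Subalgebra.center k (B ⊗[k] R) → B ⊗[k] R) h2
    rw [centerTensorEquiv_coe, centerCongrAux_coe, centerTensorEquiv_coe] at h3
    exact h3.symm
  have hψs : ∀ s : R, φ.symm ((1 : B) ⊗ₜ[k] s) = (1 : A) ⊗ₜ[k] (ψ.symm s) := by
    intro s
    apply φ.injective
    rw [φ.apply_symm_apply, hψ, ψ.apply_symm_apply]
  set g : R →ₐ[k] k := f.comp (ψ.symm : R ≃ₐ[k] R).toAlgHom with hgdef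
  have hgψ : ∀ r, g (ψ r) = f r := by
    intro r
    show f (ψ.symm (ψ r)) = f r
    rw [ψ.symm_apply_apply]
  have hfψs : ∀ s, f (ψ.symm s) = g s := fun s => rfl
  -- Step 3: the mutually inverse maps
  set Θ : A →ₐ[k] B := (charRetract g).comp
    (φ.toAlgHom.comp Algebra.TensorProduct.includeLeft) with hΘ
  set Ξ : B →ₐ[k] A := (charRetract f).comp
    (φ.symm.toAlgHom.comp Algebra.TensorProduct.includeLeft) with hΞ
  have hK2 : ∀ y ∈ Submodule.span k (badSet A f),
      φ y ∈ Submodule.span k (badSet B g) := by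
    intro y hy
    have h : Submodule.span k (badSet A f)
        ≤ (Submodule.span k (badSet B g)).comap (φ : (A ⊗[k] R) ≃ₐ[k] (B ⊗[k] R)).toLinearMap := by
      rw [Submodule.span_le]
      rintro _ ⟨a, r, hr, rfl⟩
      simp only [Set.mem_preimage, SetLike.mem_coe, Submodule.mem_comap, AlgEquiv.toLinearMap_apply]
      have h1 : (a ⊗ₜ[k] r : A ⊗[k] R) = (a ⊗ₜ[k] (1 : R)) * ((1 : A) ⊗ₜ[k] r) := by
        rw [Algebra.TensorProduct.tmul_mul_tmul, mul_one, one_mul]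
      rw [h1, map_mul, hψ]
      exact mul_one_tmul_mem_span g _ (by rw [hgψ, hr])
    exact h hy
  have hK2' : ∀ y ∈ Submodule.span k (badSet B g),
      φ.symm y ∈ Submodule.span k (badSet A f) := by
    intro y hy
    have h : Submodule.span k (badSet B g)
        ≤ (Submodule.span k (badSet A f)).comap
          (φ.symm : (B ⊗[k] R) ≃ₐ[k] (A ⊗[k] R)).toLinearMap := by
      rw [Submodule.span_le]
      rintro _ ⟨b, s, hs, rfl⟩
      simp only [Set.mem_preimage, SetLike.mem_coe, Submodule.mem_comap, AlgEquiv.toLinearMap_apply]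
      have h1 : (b ⊗ₜ[k] s : B ⊗[k] R) = (b ⊗ₜ[k] (1 : R)) * ((1 : B) ⊗ₜ[k] s) := by
        rw [Algebra.TensorProduct.tmul_mul_tmul, mul_one, one_mul]
      rw [h1, map_mul, hψs]
      exact mul_one_tmul_mem_span f _ (by rw [hfψs, hs])
    exact h hy
  have hleft : ∀ a : A, Ξ (Θ a) = a := by
    intro a
    set y : B ⊗[k] R := φ (a ⊗ₜ[k] (1 : R)) with hy
    have hΘa : Θ a = charRetract g y := rfl
    have hΞΘ : Ξ (Θ a) = charRetract f (φ.symm ((charRetract g y) ⊗ₜ[k] (1 : R))) := rfl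
    have h5 : (charRetract g y) ⊗ₜ[k] (1 : R) = y - (y - (charRetract g y) ⊗ₜ[k] (1 : R)) := by
      rw [sub_sub_cancel]
    rw [hΞΘ, h5, map_sub, map_sub]
    have h6 : φ.symm y = a ⊗ₜ[k] (1 : R) := φ.symm_apply_apply _
    rw [h6, charRetract_tmul_one]
    have h7 : charRetract f (φ.symm (y - (charRetract g y) ⊗ₜ[k] (1 : R))) = 0 :=
      charRetract_eq_zero_of_mem_span f (hK2' _ (sub_charRetract_mem_span g y))
    rw [h7, sub_zero]
  have hright : ∀ b : B, Θ (Ξ b) = b := by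
    intro b
    set x : A ⊗[k] R := φ.symm (b ⊗ₜ[k] (1 : R)) with hx
    have hΘΞ : Θ (Ξ b) = charRetract g (φ ((charRetract f x) ⊗ₜ[k] (1 : R))) := rfl
    have h5 : (charRetract f x) ⊗ₜ[k] (1 : R) = x - (x - (charRetract f x) ⊗ₜ[k] (1 : R)) := by
      rw [sub_sub_cancel]
    rw [hΘΞ, h5, map_sub, map_sub]
    have h6 : φ x = b ⊗ₜ[k] (1 : R) := φ.apply_symm_apply _
    rw [h6, charRetract_tmul_one]
    have h7 : charRetract g (φ (x - (charRetract f x) ⊗ₜ[k] (1 : R))) = 0 :=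
      charRetract_eq_zero_of_mem_span g (hK2 _ (sub_charRetract_mem_span f x))
    rw [h7, sub_zero]
  exact ⟨AlgEquiv.ofAlgHom Θ Ξ (AlgHom.ext hright) (AlgHom.ext hleft)⟩

end Main

section Final

variable {k : Type u} [Field k]

lemma subsingleton_equiv {A B : Type u} [Ring A] [Algebra k A] [Ring B] [Algebra k B]
    [Subsingleton A] [Subsingleton B] : Nonempty (A ≃ₐ[k] B) :=
  ⟨{ toFun := fun _ => 1
     invFun := fun _ => 1
     left_inv := fun _ => Subsingleton.elim _ _
     right_inv := fun _ => Subsingleton.elim _ _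
     map_mul' := fun _ _ => Subsingleton.elim _ _
     map_add' := fun _ _ => Subsingleton.elim _ _
     commutes' := fun _ => Subsingleton.elim _ _ }⟩

lemma univ_of_center_eq_bot (A : Type u) [Ring A] [Algebra k A]
    (h : Subalgebra.center k A = ⊥) : IsUniversallyCancellative k A := by
  intro R _ _ _ hFT hchar B _ _ hne
  obtain ⟨f, -⟩ := hchar
  obtain ⟨φ⟩ := hne
  haveI : Algebra.FiniteType k R := hFT
  have hN : IsNoetherianRing R := Algebra.FiniteType.isNoetherianRing k R
  by_cases hs : Subsingleton A
  · haveI := hs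
    haveI : Subsingleton (A ⊗[k] R) := by
      apply subsingleton_of_forall_eq 0
      intro x
      have h1 : (1 : A ⊗[k] R) = 0 := by
        have : (1 : A) = 0 := Subsingleton.elim _ _
        calc (1 : A ⊗[k] R) = (1 : A) ⊗ₜ[k] (1 : R) := rfl
        _ = (0 : A) ⊗ₜ[k] (1 : R) := by rw [this]
        _ = 0 := TensorProduct.zero_tmul _ _
      calc x = x * 1 := (mul_one x).symm
      _ = x * 0 := by rw [h1]
      _ = 0 := mul_zero x
    haveI : Subsingleton (B ⊗[k] R) := φ.symm.toEquiv.subsingleton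
    haveI : Subsingleton B := by
      apply subsingleton_of_forall_eq 0
      intro b
      have h1 : (b ⊗ₜ[k] (1 : R) : B ⊗[k] R) = (0 : B) ⊗ₜ[k] (1 : R) := Subsingleton.elim _ _
      have h2 := congrArg (charRetract f) h1
      rwa [charRetract_tmul_one, charRetract_tmul_one] at h2
    exact subsingleton_equiv
  · haveI : Nontrivial A := not_subsingleton_iff_nontrivial.mp hs
    haveI : Nontrivial (A ⊗[k] R) := by
      rcases subsingleton_or_nontrivial (A ⊗[k] R) with hss | hnt
      · exfalso
        have h1 : (1 : A) ⊗ₜ[k] (1 : R) = ((0 : A) ⊗ₜ[k] (1 : R) : A ⊗[k] R) :=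
          Subsingleton.elim _ _
        have h2 := congrArg (charRetract f) h1
        rw [charRetract_tmul_one, charRetract_tmul_one] at h2
        exact one_ne_zero h2
      · exact hnt
    haveI : Nontrivial (B ⊗[k] R) := by
      rcases subsingleton_or_nontrivial (B ⊗[k] R) with hss | hnt
      · exfalso
        haveI := hss
        haveI : Subsingleton (A ⊗[k] R) := φ.toEquiv.subsingleton
        exact false_of_nontrivial_of_subsingleton (A ⊗[k] R)
      · exact hnt
    haveI : Nontrivial B := by
      rcases subsingleton_or_nontrivial B with hss | hnt
      · exfalso
        haveI := hss
        have h1 : (1 : B ⊗[k] R) = 0 := by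
          have : (1 : B) = 0 := Subsingleton.elim _ _
          calc (1 : B ⊗[k] R) = (1 : B) ⊗ₜ[k] (1 : R) := rfl
          _ = (0 : B) ⊗ₜ[k] (1 : R) := by rw [this]
          _ = 0 := TensorProduct.zero_tmul _ _
        exact one_ne_zero h1
      · exact hnt
    exact main_equiv hN f h φ

end Final

/-- If the center of `A` is exactly `k`, then `A` is universally cancellative;
in particular `A` is cancellative. -/
theorem universallyCancellative_of_center_eq_bot
    (k A : Type u) [Field k] [Ring A] [Algebra k A]
    (h : Subalgebra.center k A = ⊥) :
    IsUniversallyCancellative k A ∧ IsCancellative k A := by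
  have huniv : IsUniversallyCancellative k A := univ_of_center_eq_bot A h
  refine ⟨huniv, ?_⟩
  intro B _ _ hne
  obtain ⟨e⟩ := hne
  refine huniv (Polynomial k) (inferInstance : Algebra.FiniteType k (Polynomial k))
    ⟨Polynomial.aeval (0 : k), fun a => ⟨Polynomial.C a, by simp⟩⟩ B ?_
  exact ⟨((polyEquivTensor k A).symm.trans e).trans (polyEquivTensor k B)⟩
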